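/- Gaussian kernel interpolation of arbitrary labels: let σ > 0, let x₁, …, x_N be pairwise distinct points in ℝⁿ, and let y₁, …, y_N ∈ ℝ be arbitrary target values. Then there exist coefficients c₁, …, c_N ∈ ℝ such that the function f(x) = ∑_{j=1}^N c_j exp(-‖x - x_j‖²/σ²) satisfies f(x_i) = y_i for every i ∈ {1, …, N}. -/

import Mathlib

open MeasureTheory Real Finset Function


-- Dedekind: linear independence of x ↦ exp ⟪x, b j⟫ for injective b.
lemma linIndep_exp_inner {E : Type*} [NormedAddCommGroup E] [InnerProductSpace ℝ E]
    {N : ℕ} (b : Fin N → E) (hb : Function.Injective b) :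
    LinearIndependent ℝ (fun j : Fin N => fun p : E => Real.exp (inner ℝ p (b j) : ℝ)) := by
  let χ : E → (Multiplicative E →* ℝ) := fun w =>
    { toFun := fun m => Real.exp (inner ℝ (Multiplicative.toAdd m) w : ℝ)
      map_one' := by simp
      map_mul' := fun a c => by
        simp [inner_add_left, Real.exp_add] }
  have hχ : Function.Injective χ := by
    intro w w' h
    have h1 := congrArg (fun f : Multiplicative E →* ℝ =>
      f (Multiplicative.ofAdd (w - w'))) h
    simp only [χ, MonoidHom.coe_mk, OneHom.coe_mk, toAdd_ofAdd] at h1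
    have h2 : (inner ℝ (w - w') w : ℝ) = inner ℝ (w - w') w' := Real.exp_injective h1
    have h3 : (inner ℝ (w - w') (w - w') : ℝ) = 0 := by
      rw [inner_sub_right, h2]; ring
    exact sub_eq_zero.mp (inner_self_eq_zero.mp h3)
  exact (linearIndependent_monoidHom (Multiplicative E) ℝ).comp (χ ∘ b) (hχ.comp hb)


lemma gauss_eval_zero {n N : ℕ} {σ : ℝ} (hσ : 0 < σ)
    (x : Fin N → EuclideanSpace ℝ (Fin n)) (hx : Function.Injective x)
    (c : Fin N → ℝ)
    (h : ∀ p : EuclideanSpace ℝ (Fin n),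
      ∑ j, c j * Real.exp (-(2/σ^2) * ‖p - x j‖^2) = 0) : c = 0 := by
  have hσ2 : (0:ℝ) < σ^2 := by positivity
  set b : Fin N → EuclideanSpace ℝ (Fin n) := fun j => (4/σ^2) • x j with hbdef
  have hbinj : Function.Injective b := by
    intro i j hij
    exact hx (smul_right_injective _ (by positivity) hij)
  set d : Fin N → ℝ := fun j => c j * Real.exp (-(2/σ^2) * ‖x j‖^2) with hddef
  have key : ∀ p : EuclideanSpace ℝ (Fin n),
      ∑ j, d j * Real.exp (inner ℝ p (b j) : ℝ) = 0 := by
    intro p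
    have expand : ∀ j, d j * Real.exp (inner ℝ p (b j) : ℝ) =
        Real.exp ((2/σ^2) * ‖p‖^2) * (c j * Real.exp (-(2/σ^2) * ‖p - x j‖^2)) := by
      intro j
      have hib : (inner ℝ p (b j) : ℝ) = (4/σ^2) * inner ℝ p (x j) := by
        rw [hbdef]; exact real_inner_smul_right p (x j) (4/σ^2)
      have hn : ‖p - x j‖^2 = ‖p‖^2 - 2 * inner ℝ p (x j) + ‖x j‖^2 :=
        norm_sub_sq_real p (x j)
      rw [hib, hn, hddef]
      rw [show (-(2/σ^2) * (‖p‖^2 - 2*(inner ℝ p (x j):ℝ) + ‖x j‖^2))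
          = (-(2/σ^2) * ‖x j‖^2) + ((4/σ^2) * inner ℝ p (x j)) + (-((2/σ^2) * ‖p‖^2)) by ring]
      rw [Real.exp_add, Real.exp_add, Real.exp_neg]
      field_simp
    calc ∑ j, d j * Real.exp (inner ℝ p (b j) : ℝ)
        = Real.exp ((2/σ^2) * ‖p‖^2) * ∑ j, c j * Real.exp (-(2/σ^2) * ‖p - x j‖^2) := by
          rw [Finset.mul_sum]; exact Finset.sum_congr rfl fun j _ => expand j
      _ = 0 := by rw [h p, mul_zero]
  have hli := linIndep_exp_inner b hbinj
  have hd0 : ∀ j, d j = 0 := by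
    have := (Fintype.linearIndependent_iff.mp hli) d ?_
    · exact this
    · funext p
      simpa [Finset.sum_apply] using key p
  funext j
  have := hd0 j
  have hne : Real.exp (-(2/σ^2) * ‖x j‖^2) ≠ 0 := Real.exp_ne_zero _
  simpa [hddef, mul_eq_zero, hne] using this

section GaussInt
variable {V : Type*} [NormedAddCommGroup V] [InnerProductSpace ℝ V] [FiniteDimensional ℝ V]
  [MeasurableSpace V] [BorelSpace V]

lemma integrable_gauss {b : ℝ} (hb : 0 < b) :
    Integrable (fun v : V => rexp (-b * ‖v‖^2)) := by
  have h := (GaussianFourier.integrable_cexp_neg_mul_sq_norm_add (b := (b:ℂ))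
    (by simpa using hb) 0 (0:V)).re
  refine h.congr (Filter.Eventually.of_forall fun v => ?_)
  have : -(b:ℂ) * ‖v‖^2 + 0 * (inner ℝ (0:V) v : ℝ) = ((-b * ‖v‖^2 : ℝ) : ℂ) := by
    push_cast; ring
  have h2 : RCLike.re (Complex.exp (-(b:ℂ)*(‖v‖:ℂ)^2 + 0*((inner ℝ (0:V) v:ℝ):ℂ))) = rexp (-b*‖v‖^2) := by
    rw [this]; simp [RCLike.re_to_complex, ← Complex.ofReal_pow, ← Complex.ofReal_mul, ← Complex.ofReal_neg, Complex.exp_ofReal_re]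
  exact h2

lemma integral_gauss_pos {b : ℝ} (hb : 0 < b) :
    0 < ∫ v : V, rexp (-b * ‖v‖^2) := by
  rw [GaussianFourier.integral_rexp_neg_mul_sq_norm hb]
  exact Real.rpow_pos_of_pos (div_pos Real.pi_pos hb) _

end GaussInt

/-- **Gaussian kernel interpolation of arbitrary labels.**
Let `σ > 0`, `x₁, …, x_N` pairwise distinct points in `ℝⁿ`, and `y₁, …, y_N ∈ ℝ`
arbitrary targets.  Then there exist coefficients `c₁, …, c_N ∈ ℝ` such that
`f(x) = ∑ j, c j * exp (-‖x - x j‖² / σ²)` satisfies `f (x i) = y i` for all `i`. -/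
theorem gaussian_kernel_interpolation
    {n N : ℕ}
    (σ : ℝ) (hσ : 0 < σ)
    (x : Fin N → EuclideanSpace ℝ (Fin n))
    (hx : Function.Injective x)
    (y : Fin N → ℝ) :
    ∃ c : Fin N → ℝ, ∀ i : Fin N,
      (∑ j : Fin N, c j * Real.exp (-(‖x i - x j‖ ^ 2 / σ ^ 2))) = y i := by
  classical
  have hσ2 : (0:ℝ) < σ^2 := by positivity
  set K : Matrix (Fin N) (Fin N) ℝ :=
    Matrix.of fun i j => Real.exp (-(‖x i - x j‖ ^ 2 / σ ^ 2)) with hK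
  -- injectivity of mulVec
  have hinj : Function.Injective K.mulVecLin := by
    rw [injective_iff_map_eq_zero]
    intro c hc
    -- the combined Gaussian function
    set m : Fin N → Fin N → EuclideanSpace ℝ (Fin n) :=
      fun i j => ((2:ℝ)⁻¹) • (x i + x j) with hm
    have hpar : ∀ i j (p : EuclideanSpace ℝ (Fin n)),
        ‖p - x i‖^2 + ‖p - x j‖^2 = 2*‖p - m i j‖^2 + ‖x i - x j‖^2/2 := by
      intro i j p
      have h1 := parallelogram_law_with_norm ℝ (p - x i) (p - x j)
      have h2 : p - x i + (p - x j) = (2:ℝ) • (p - m i j) := by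
        rw [hm]; module
      have h3 : p - x i - (p - x j) = x j - x i := by abel
      rw [h2, h3, norm_smul, norm_sub_rev (x j)] at h1
      simp only [Real.norm_ofNat, mul_pow] at h1
      linarith
    have hprod : ∀ i j (p : EuclideanSpace ℝ (Fin n)),
        rexp (-(2/σ^2) * ‖p - x i‖^2) * rexp (-(2/σ^2) * ‖p - x j‖^2)
          = K i j * rexp (-(4/σ^2) * ‖p - m i j‖^2) := by
      intro i j p
      rw [← Real.exp_add, hK]
      show _ = rexp (-(‖x i - x j‖ ^ 2 / σ ^ 2)) * rexp (-(4/σ^2) * ‖p - m i j‖^2)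
      rw [← Real.exp_add]
      congr 1
      have h := hpar i j p
      field_simp
      nlinarith [h]
    set g : EuclideanSpace ℝ (Fin n) → ℝ :=
      fun p => ∑ j, c j * rexp (-(2/σ^2) * ‖p - x j‖^2) with hg
    -- each product term is integrable
    have hint : ∀ i j, Integrable (fun p : EuclideanSpace ℝ (Fin n) =>
        (c i * c j * K i j) * rexp (-(4/σ^2) * ‖p - m i j‖^2)) := by
      intro i j
      have := (integrable_gauss (V := EuclideanSpace ℝ (Fin n))
        (b := 4/σ^2) (by positivity)).comp_sub_right (m i j)
      exact this.const_mul _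
    have hgsq : ∀ p, g p ^ 2 = ∑ i, ∑ j,
        (c i * c j * K i j) * rexp (-(4/σ^2) * ‖p - m i j‖^2) := by
      intro p
      rw [hg, sq, Finset.sum_mul_sum]
      refine Finset.sum_congr rfl fun i _ => Finset.sum_congr rfl fun j _ => ?_
      rw [show c i * rexp (-(2/σ^2) * ‖p - x i‖^2) * (c j * rexp (-(2/σ^2) * ‖p - x j‖^2))
          = c i * c j * (rexp (-(2/σ^2) * ‖p - x i‖^2) * rexp (-(2/σ^2) * ‖p - x j‖^2)) by ring,
        hprod i j p]
      ring
    have hgsqint : Integrable (fun p => g p ^ 2) := by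
      refine (integrable_finset_sum Finset.univ fun i _ =>
        integrable_finset_sum Finset.univ fun j _ => hint i j).congr ?_
      exact Filter.Eventually.of_forall fun p => (hgsq p).symm
    -- the Gaussian integral constant
    set I : ℝ := ∫ v : EuclideanSpace ℝ (Fin n), rexp (-(4/σ^2) * ‖v‖^2) with hI
    have hIpos : 0 < I := integral_gauss_pos (by positivity)
    have hKc : ∀ i, ∑ j, K i j * c j = 0 := by
      intro i
      have := congrFun hc i
      simpa [Matrix.mulVecLin_apply, Matrix.mulVec, dotProduct] using this
    have hintegral : ∫ p, g p ^ 2 = 0 := by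
      have e1 : ∫ p, g p ^ 2 = ∑ i, ∑ j, (c i * c j * K i j) * I := by
        rw [show (fun p => g p ^ 2) = fun p => ∑ i, ∑ j,
            (c i * c j * K i j) * rexp (-(4/σ^2) * ‖p - m i j‖^2) from funext hgsq]
        rw [integral_finset_sum Finset.univ fun i _ =>
          integrable_finset_sum Finset.univ fun j _ => hint i j]
        refine Finset.sum_congr rfl fun i _ => ?_
        rw [integral_finset_sum Finset.univ fun j _ => hint i j]
        refine Finset.sum_congr rfl fun j _ => ?_
        rw [integral_const_mul]
        congr 1
        exact integral_sub_right_eq_self (fun v => rexp (-(4/σ^2) * ‖v‖^2)) (m i j)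
      rw [e1]
      have : ∑ i, ∑ j, (c i * c j * K i j) * I = (∑ i, c i * ∑ j, K i j * c j) * I := by
        rw [Finset.sum_mul]
        refine Finset.sum_congr rfl fun i _ => ?_
        rw [Finset.mul_sum, Finset.sum_mul]
        refine Finset.sum_congr rfl fun j _ => ?_
        ring
      rw [this]
      simp [hKc]
    -- conclude g = 0
    have hgcont : Continuous g := by
      refine continuous_finset_sum _ fun j _ => Continuous.mul continuous_const ?_
      exact Real.continuous_exp.comp (by fun_prop)
    have hgsq0 : (fun p => g p ^ 2) = 0 := by
      have hae : (fun p => g p ^ 2) =ᵐ[volume] 0 :=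
        (integral_eq_zero_iff_of_nonneg (fun p => sq_nonneg (g p)) hgsqint).mp hintegral
      exact ((hgcont.pow 2).ae_eq_iff_eq volume continuous_const).mp hae
    have hg0 : ∀ p, g p = 0 := fun p =>
      pow_eq_zero_iff (n := 2) (by norm_num) |>.mp (congrFun hgsq0 p)
    exact gauss_eval_zero hσ x hx c hg0
  have hsurj : Function.Surjective K.mulVecLin :=
    (LinearMap.injective_iff_surjective).mp hinj
  obtain ⟨c, hcy⟩ := hsurj y
  refine ⟨c, fun i => ?_⟩
  have := congrFun hcy i
  simp only [Matrix.mulVecLin_apply, Matrix.mulVec, dotProduct] at this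
  rw [← this]
  exact Finset.sum_congr rfl fun j _ => mul_comm _ _
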